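/- Let R be a commutative ring and f ∈ 1 + t·R[[t]]. Then f can be uniquely written as the convergent infinite product f = ∏_{i≥1} (1 − c_i t^i) with c_i ∈ R. -/

import Mathlib

open PowerSeries

private lemma constCoeff_prod_one_sub {R : Type*} [CommRing R] (c : ℕ → R) (n : ℕ) :
    PowerSeries.constantCoeff (R := R)
      (∏ i ∈ Finset.range n, (1 - PowerSeries.C (R := R) (c i) * PowerSeries.X ^ (i + 1))) = 1 := by
  rw [map_prod]
  apply Finset.prod_eq_one
  intro i _
  simp [pow_succ]

private noncomputable def Paux {R : Type*} [CommRing R] (f : PowerSeries R) : ℕ → PowerSeries R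
  | 0 => 1
  | n + 1 => Paux f n *
      (1 - PowerSeries.C (R := R) (PowerSeries.coeff (R := R) (n + 1) (Paux f n) - PowerSeries.coeff (R := R) (n + 1) f)
        * PowerSeries.X ^ (n + 1))

private lemma Paux_eq_prod {R : Type*} [CommRing R] (f : PowerSeries R) (n : ℕ) :
    Paux f n = ∏ i ∈ Finset.range n,
      (1 - PowerSeries.C (R := R) (PowerSeries.coeff (R := R) (i + 1) (Paux f i) - PowerSeries.coeff (R := R) (i + 1) f)
        * PowerSeries.X ^ (i + 1)) := by
  induction n with
  | zero => simp [Paux]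
  | succ n ih => rw [Finset.prod_range_succ, ← ih, Paux]

private lemma Paux_constCoeff {R : Type*} [CommRing R] (f : PowerSeries R) (n : ℕ) :
    PowerSeries.constantCoeff (R := R) (Paux f n) = 1 := by
  rw [Paux_eq_prod]; exact constCoeff_prod_one_sub _ n

private lemma Paux_key {R : Type*} [CommRing R] (f : PowerSeries R)
    (hf : PowerSeries.constantCoeff (R := R) f = 1) :
    ∀ n k : ℕ, k ≤ n → PowerSeries.coeff (R := R) k (Paux f n) = PowerSeries.coeff (R := R) k f := by
  intro n
  induction n with
  | zero =>
    intro k hk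
    interval_cases k
    simp [Paux, hf]
  | succ n ih =>
    intro k hk
    have : Paux f (n + 1) = Paux f n -
        (Paux f n * PowerSeries.C (R := R)
          (PowerSeries.coeff (R := R) (n + 1) (Paux f n) - PowerSeries.coeff (R := R) (n + 1) f))
          * PowerSeries.X ^ (n + 1) := by
      rw [Paux]; ring
    rw [this, map_sub, PowerSeries.coeff_mul_X_pow']
    rcases Nat.lt_succ_iff_lt_or_eq.mp (Nat.lt_succ_of_le hk) with h | rfl
    · rw [if_neg (by omega), sub_zero]
      exact ih k (Nat.lt_succ_iff.mp h)
    · rw [if_pos le_rfl, Nat.sub_self, PowerSeries.coeff_zero_eq_constantCoeff, map_mul,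
        Paux_constCoeff, one_mul, PowerSeries.constantCoeff_C]
      ring

/-- **Unique infinite product decomposition in `1 + t·R[[t]]`.**
Let `R` be a commutative ring and `f ∈ 1 + t·R[[t]]`.  Then `f` can be uniquely written as the
(t-adically convergent) infinite product `f = ∏_{i≥1} (1 − cᵢ tⁱ)` with `cᵢ ∈ R`:
after taking the first `n` factors, the partial product agrees with `f` modulo `t^{n+1}`. -/
theorem powerSeries_unique_product_decomposition
    (R : Type*) [CommRing R] (f : PowerSeries R)
    (hf : PowerSeries.constantCoeff (R := R) f = 1) :
    ∃! c : ℕ → R, ∀ n : ℕ, ∀ k : ℕ, k ≤ n →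
      PowerSeries.coeff (R := R) k
          (∏ i ∈ Finset.range n, (1 - PowerSeries.C (R := R) (c i) * PowerSeries.X ^ (i + 1))) =
        PowerSeries.coeff (R := R) k f := by
  refine ⟨fun i => PowerSeries.coeff (R := R) (i + 1) (Paux f i) - PowerSeries.coeff (R := R) (i + 1) f,
    fun n k hk => ?_, ?_⟩
  · rw [← Paux_eq_prod]
    exact Paux_key f hf n k hk
  · intro c hc
    have hme := Paux_key f hf
    funext i
    induction i using Nat.strong_induction_on with
    | _ i ih =>
      have hQ : (∏ j ∈ Finset.range i, (1 - PowerSeries.C (R := R) (c j) * PowerSeries.X ^ (j + 1))) =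
          ∏ j ∈ Finset.range i,
            (1 - PowerSeries.C (R := R) (PowerSeries.coeff (R := R) (j + 1) (Paux f j) -
              PowerSeries.coeff (R := R) (j + 1) f) * PowerSeries.X ^ (j + 1)) := by
        apply Finset.prod_congr rfl
        intro j hj
        rw [ih j (Finset.mem_range.mp hj)]
      have h1 := hc (i + 1) (i + 1) le_rfl
      rw [Finset.prod_range_succ] at h1
      have h2 : PowerSeries.coeff (R := R) (i + 1)
          ((∏ j ∈ Finset.range i, (1 - PowerSeries.C (R := R) (c j) * PowerSeries.X ^ (j + 1))) *
            (1 - PowerSeries.C (R := R) (PowerSeries.coeff (R := R) (i + 1) (Paux f i) -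
              PowerSeries.coeff (R := R) (i + 1) f) * PowerSeries.X ^ (i + 1))) =
          PowerSeries.coeff (R := R) (i + 1) f := by
        have hP : Paux f (i + 1) = Paux f i *
            (1 - PowerSeries.C (R := R) (PowerSeries.coeff (R := R) (i + 1) (Paux f i) -
              PowerSeries.coeff (R := R) (i + 1) f) * PowerSeries.X ^ (i + 1)) := rfl
        rw [hQ, ← Paux_eq_prod, ← hP]
        exact hme (i + 1) (i + 1) le_rfl
      -- compare h1 and h2
      have expand : ∀ a : R, PowerSeries.coeff (R := R) (i + 1)
          ((∏ j ∈ Finset.range i, (1 - PowerSeries.C (R := R) (c j) * PowerSeries.X ^ (j + 1))) *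
            (1 - PowerSeries.C (R := R) a * PowerSeries.X ^ (i + 1))) =
          PowerSeries.coeff (R := R) (i + 1)
            (∏ j ∈ Finset.range i, (1 - PowerSeries.C (R := R) (c j) * PowerSeries.X ^ (j + 1))) - a := by
        intro a
        have : (∏ j ∈ Finset.range i, (1 - PowerSeries.C (R := R) (c j) * PowerSeries.X ^ (j + 1))) *
            (1 - PowerSeries.C (R := R) a * PowerSeries.X ^ (i + 1)) =
            (∏ j ∈ Finset.range i, (1 - PowerSeries.C (R := R) (c j) * PowerSeries.X ^ (j + 1))) -
            ((∏ j ∈ Finset.range i, (1 - PowerSeries.C (R := R) (c j) * PowerSeries.X ^ (j + 1))) *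
              PowerSeries.C (R := R) a) * PowerSeries.X ^ (i + 1) := by ring
        rw [this, map_sub, PowerSeries.coeff_mul_X_pow', if_pos le_rfl, Nat.sub_self,
          PowerSeries.coeff_zero_eq_constantCoeff, map_mul, constCoeff_prod_one_sub,
          one_mul, PowerSeries.constantCoeff_C]
      rw [expand] at h1 h2
      have h3 := h1.trans h2.symm
      exact sub_right_injective h3
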